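/- In the conformal geometric algebra of the plane, sandwiching with the vector e implements inversion: -e F(x) e = x² F(x/x²) for any nonzero vector x in span(e₁,e₂), so that as a projective (homogeneous) null vector, -eF(x)e represents the inverted point x/x². -/
import Mathlib


noncomputable section
open CliffordAlgebra

/-- The quadratic form of signature (+,+,+,-) for the conformal geometric algebra of the
plane: generators e₁, e₂, e, ē with e₁² = e₂² = e² = 1 and ē² = -1. -/
def Q31 : QuadraticForm ℝ (Fin 4 → ℝ) :=
  QuadraticMap.weightedSumSquares ℝ ![(1 : ℝ), 1, 1, -1]

/-- The conformal geometric algebra Cl(3,1) of the plane. -/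
abbrev CGA := CliffordAlgebra Q31

/-- The generators: `g 0 = e₁`, `g 1 = e₂`, `g 2 = e`, `g 3 = ē`. -/
def g (i : Fin 4) : CGA := ι Q31 (Pi.single i 1)

/-- The null vector `n = e + ē`. -/
def nv : CGA := g 2 + g 3

/-- The null vector `n̄ = e - ē`. -/
def nbv : CGA := g 2 - g 3

/-- The conformal embedding `F(x) = x² n + 2x - n̄` of a point `x` of the plane. -/
def Fc (x : Fin 2 → ℝ) : CGA :=
  (x 0 ^ 2 + x 1 ^ 2) • nv + (2 : ℝ) • (x 0 • g 0 + x 1 • g 1) - nbv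

lemma Q31_single (i : Fin 4) : Q31 (Pi.single i 1) = ![(1:ℝ),1,1,-1] i := by
  simp [Q31, QuadraticMap.weightedSumSquares_apply, Fin.sum_univ_four, Pi.single_apply]

lemma g_sq (i : Fin 4) : g i * g i = algebraMap ℝ CGA (![(1:ℝ),1,1,-1] i) := by
  rw [g, ι_sq_scalar, Q31_single]

lemma g_anticomm {i j : Fin 4} (h : i ≠ j) : g i * g j = -(g j * g i) := by
  have := CliffordAlgebra.ι_mul_ι_add_swap (Q := Q31) (Pi.single i 1) (Pi.single j 1)
  have hp : QuadraticMap.polar Q31 (Pi.single i 1) (Pi.single j 1) = 0 := by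
    simp [QuadraticMap.polar, Q31, QuadraticMap.weightedSumSquares_apply,
      Fin.sum_univ_four, Pi.single_apply]
    fin_cases i <;> fin_cases j <;> simp_all
  rw [hp, map_zero] at this
  rw [g, g] at *
  linear_combination (norm := noncomm_ring) this

lemma A2 : g 2 * g 2 = 1 := by rw [g_sq]; simp
lemma A0 : g 2 * g 0 * g 2 = -g 0 := by
  rw [g_anticomm (by decide : (2:Fin 4) ≠ 0), neg_mul, mul_assoc, A2]; simp
lemma A1 : g 2 * g 1 * g 2 = -g 1 := by
  rw [g_anticomm (by decide : (2:Fin 4) ≠ 1), neg_mul, mul_assoc, A2]; simp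
lemma A3 : g 2 * g 3 * g 2 = -g 3 := by
  rw [g_anticomm (by decide : (2:Fin 4) ≠ 3), neg_mul, mul_assoc, A2]; simp
lemma A2' : g 2 * g 2 * g 2 = g 2 := by rw [A2, one_mul]

/-- Sandwiching with the vector `e` implements inversion:
`-e F(x) e = x² F(x/x²)` for every nonzero `x` in the plane, so that projectively (conformal
points being homogeneous null vectors, defined up to nonzero scalar) `-e F(x) e` represents
the inverted point `x/x²`. -/
theorem inversion_versor_acts (x : Fin 2 → ℝ) (hx : x ≠ 0) :
    -(g 2 * Fc x * g 2) =
      (x 0 ^ 2 + x 1 ^ 2) • Fc (fun i => x i / (x 0 ^ 2 + x 1 ^ 2)) := by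
  have h01 : x 0 ≠ 0 ∨ x 1 ≠ 0 := by
    by_contra h
    push_neg at h
    exact hx (funext fun i => by fin_cases i <;> simp [h.1, h.2])
  have hr : (0:ℝ) < x 0 ^ 2 + x 1 ^ 2 := by
    rcases h01 with h | h
    · nlinarith [sq_nonneg (x 1), sq_pos_of_ne_zero h]
    · nlinarith [sq_nonneg (x 0), sq_pos_of_ne_zero h]
  have hr' : x 0 ^ 2 + x 1 ^ 2 ≠ 0 := ne_of_gt hr
  simp only [Fc, nv, nbv, mul_add, add_mul, mul_sub, sub_mul, smul_mul_assoc,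
    mul_smul_comm, ← mul_assoc, A0, A1, A2', A3, smul_add, smul_sub, smul_smul]
  match_scalars <;> field_simp <;> ring
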